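/- For distinct real numbers a_1, ..., a_n, the iterated integral ∫_0^1 dx_n ∫_0^{x_n} dx_{n-1} ... ∫_0^{x_2} dx_1 exp(a_1 x_1 + ... + a_n x_n) equals exp[0, a_n, a_n + a_{n-1}, ..., a_n + ... + a_1], where the points 0, a_n, a_n+a_{n-1}, ..., a_n+...+a_1 are assumed distinct. -/

import Mathlib

open MeasureTheory

/-- Divided difference at points `a 0, ..., a n`, defined recursively. -/
noncomputable def divDiff (f : ℝ → ℝ) : ℕ → (ℕ → ℝ) → ℝ
  | 0, a => f (a 0)
  | (n+1), a => (divDiff f n (fun i => a (i+1)) - divDiff f n a) / (a (n+1) - a 0)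

namespace HermiteGenocchiAux

lemma divDiff_succ (f : ℝ → ℝ) (n : ℕ) (a : ℕ → ℝ) :
    divDiff f (n+1) a = (divDiff f n (fun i => a (i+1)) - divDiff f n a) / (a (n+1) - a 0) := rfl

lemma divDiff_congr (f : ℝ → ℝ) : ∀ (n : ℕ) (a b : ℕ → ℝ), (∀ i, i ≤ n → a i = b i) →
    divDiff f n a = divDiff f n b := by
  intro n
  induction n with
  | zero => intro a b h; simp [divDiff, h 0 le_rfl]
  | succ n ih =>
    intro a b h
    simp only [divDiff]
    rw [ih (fun i => a (i+1)) (fun i => b (i+1)) (fun i hi => h (i+1) (by omega)),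
      ih a b (fun i hi => h i (by omega)), h (n+1) le_rfl, h 0 (by omega)]

/-- The "remove one of the last two points" recursion for divided differences. -/
lemma divDiff_sub_last (f : ℝ → ℝ) : ∀ (n : ℕ) (y : ℕ → ℝ),
    (∀ i j, i ≤ n+1 → j ≤ n+1 → i ≠ j → y i ≠ y j) →
    divDiff f (n+1) y =
      (divDiff f n (fun i => if i = n then y (n+1) else y i) - divDiff f n y) /
        (y (n+1) - y n) := by
  intro n
  induction n with
  | zero =>
    intro y hy
    simp only [divDiff]
    norm_num
  | succ n ih =>
    intro y hy
    have h21 : y (n+1+1) - y (n+1) ≠ 0 := sub_ne_zero.2 (hy _ _ le_rfl (by omega) (by omega))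
    have h20 : y (n+1+1) - y 0 ≠ 0 := sub_ne_zero.2 (hy _ _ le_rfl (by omega) (by omega))
    have h10 : y (n+1) - y 0 ≠ 0 := sub_ne_zero.2 (hy _ _ (by omega) (by omega) (by omega))
    have hIH : divDiff f (n+1) (fun i => y (i+1)) =
        (divDiff f n (fun i => if i = n then y (n+1+1) else y (i+1)) -
          divDiff f n (fun i => y (i+1))) / (y (n+1+1) - y (n+1)) := by
      have := ih (fun i => y (i+1)) (fun i j hi hj hij => hy (i+1) (j+1) (by omega) (by omega)
        (by omega))
      simpa using this
    have e1 : (fun i => if i + 1 = n + 1 then y (n+1+1) else y (i+1)) =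
        (fun i => if i = n then y (n+1+1) else y (i+1)) := by
      funext i; simp [Nat.succ_inj]
    have e2 : divDiff f n (fun i => if i = n+1 then y (n+1+1) else y i) = divDiff f n y :=
      divDiff_congr f n _ _ (fun i hi => by simp [Nat.ne_of_lt (by omega : i < n+1)])
    have hq : divDiff f (n+1) (fun i => if i = n+1 then y (n+1+1) else y i) =
        (divDiff f n (fun i => if i = n then y (n+1+1) else y (i+1)) - divDiff f n y) /
          (y (n+1+1) - y 0) := by
      rw [divDiff_succ]
      simp only [e1, e2]
      norm_num
    rw [divDiff_succ f (n+1) y, hIH, hq, divDiff_succ f n y]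
    field_simp
    ring

/-- The points `0, aₙ, aₙ + aₙ₋₁, ...`. -/
noncomputable def pts (n : ℕ) (a : Fin n → ℝ) (k : ℕ) : ℝ :=
  ∑ l : Fin n, if n - k ≤ (l : ℕ) then a l else 0

lemma pts_zero (n : ℕ) (a : Fin n → ℝ) : pts n a 0 = 0 := by
  unfold pts
  refine Finset.sum_eq_zero fun l _ => ?_
  have := l.is_lt
  rw [if_neg (by omega)]

lemma pts_tail (n : ℕ) (a : Fin (n+1) → ℝ) (k : ℕ) (hk : k ≤ n) :
    pts (n+1) a k = pts n (fun i => a i.succ) k := by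
  unfold pts
  rw [Fin.sum_univ_succ]
  simp only [Fin.val_zero, Fin.val_succ]
  simp only [show ¬ (n + 1 - k ≤ 0) by omega, if_false]
  rw [zero_add]
  refine Finset.sum_congr rfl fun l _ => ?_
  congr 1
  simp only [eq_iff_iff]
  omega

lemma pts_top (n : ℕ) (a : Fin n → ℝ) : pts n a n = ∑ l, a l := by
  unfold pts
  refine Finset.sum_congr rfl fun l _ => if_pos (by omega)

/-- The ordered simplex. -/
def Spx (n : ℕ) : Set (Fin n → ℝ) :=
  {x | (∀ i, 0 ≤ x i ∧ x i ≤ 1) ∧ ∀ i j, i ≤ j → x i ≤ x j}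

/-- Upper bound for the extra (innermost) variable. -/
noncomputable def Bnd (n : ℕ) (y : Fin n → ℝ) : ℝ :=
  if h : n = 0 then 1 else y ⟨0, Nat.pos_of_ne_zero h⟩

lemma isClosed_Spx (n : ℕ) : IsClosed (Spx n) := by
  have : Spx n = (⋂ i, {x : Fin n → ℝ | 0 ≤ x i} ∩ {x | x i ≤ 1}) ∩
      ⋂ (i) (j) (_ : i ≤ j), {x : Fin n → ℝ | x i ≤ x j} := by
    ext x
    simp only [Spx, Set.mem_setOf_eq, Set.mem_inter_iff, Set.mem_iInter, Set.mem_setOf_eq,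
      Set.mem_inter_iff]
  rw [this]
  exact (isClosed_iInter fun i => ((isClosed_le continuous_const (continuous_apply i)).inter
      (isClosed_le (continuous_apply i) continuous_const))).inter
    (isClosed_iInter fun i => isClosed_iInter fun j => isClosed_iInter fun _ =>
      isClosed_le (continuous_apply i) (continuous_apply j))

lemma isCompact_Spx (n : ℕ) : IsCompact (Spx n) := by
  refine IsCompact.of_isClosed_subset
    (isCompact_univ_pi fun _ => isCompact_Icc (a := (0:ℝ)) (b := 1)) (isClosed_Spx n) ?_
  intro x hx i _
  exact ⟨(hx.1 i).1, (hx.1 i).2⟩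

lemma measurableSet_Spx (n : ℕ) : MeasurableSet (Spx n) := (isClosed_Spx n).measurableSet

lemma contExp {n : ℕ} (c : Fin n → ℝ) :
    Continuous fun y : Fin n → ℝ => Real.exp (∑ i, c i * y i) :=
  Real.continuous_exp.comp (continuous_finset_sum _ fun i _ =>
    continuous_const.mul (continuous_apply i))

lemma integrableOn_Spx {n : ℕ} (c : Fin n → ℝ) :
    IntegrableOn (fun y : Fin n → ℝ => Real.exp (∑ i, c i * y i)) (Spx n) :=
  (contExp c).continuousOn.integrableOn_compact (isCompact_Spx n)

lemma Bnd_nonneg {n : ℕ} {y : Fin n → ℝ} (hy : y ∈ Spx n) : 0 ≤ Bnd n y := by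
  unfold Bnd
  split
  · norm_num
  · exact (hy.1 _).1

lemma Bnd_le_one {n : ℕ} {y : Fin n → ℝ} (hy : y ∈ Spx n) : Bnd n y ≤ 1 := by
  unfold Bnd
  split
  · norm_num
  · exact (hy.1 _).2

lemma cons_mem_Spx {n : ℕ} {t : ℝ} {y : Fin n → ℝ} :
    Fin.cons t y ∈ Spx (n+1) ↔ y ∈ Spx n ∧ t ∈ Set.Icc 0 (Bnd n y) := by
  constructor
  · rintro ⟨h1, h2⟩
    have hy : y ∈ Spx n := by
      refine ⟨fun i => by simpa using h1 i.succ, fun i j hij => ?_⟩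
      have := h2 i.succ j.succ (by simpa using hij)
      simpa using this
    refine ⟨hy, ⟨(h1 0).1, ?_⟩⟩
    unfold Bnd
    split
    · exact (h1 0).2
    · have := h2 0 (Fin.succ ⟨0, Nat.pos_of_ne_zero (by assumption)⟩) (Fin.zero_le _)
      simpa only [Fin.cons_succ, Fin.cons_zero] using this
  · rintro ⟨hy, ht0, ht1⟩
    have htle : ∀ i : Fin n, t ≤ y i := by
      intro i
      have hn : n ≠ 0 := fun h => by subst h; exact i.elim0
      refine le_trans ht1 ?_
      rw [Bnd, dif_neg hn]
      exact hy.2 ⟨0, Nat.pos_of_ne_zero hn⟩ i (by simp [Fin.le_def])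
    constructor
    · intro i
      cases i using Fin.cases with
      | zero => exact ⟨ht0, ht1.trans (Bnd_le_one hy)⟩
      | succ j => simpa using hy.1 j
    · intro i j hij
      cases i using Fin.cases with
      | zero =>
        cases j using Fin.cases with
        | zero => simp
        | succ j' => simpa using htle j'
      | succ i' =>
        cases j using Fin.cases with
        | zero => exact absurd (Fin.le_zero_iff.mp hij) (Fin.succ_ne_zero i')
        | succ j' => simpa using hy.2 i' j' (Fin.succ_le_succ_iff.mp hij)

lemma fubini_step (n : ℕ) (a : Fin (n+1) → ℝ) (ha0 : a 0 ≠ 0) :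
    (∫ x in Spx (n+1), Real.exp (∑ i, a i * x i)) =
      ∫ y in Spx n, Real.exp (∑ i : Fin n, a i.succ * y i) *
        ((Real.exp (a 0 * Bnd n y) - 1) / a 0) := by
  classical
  set F : (Fin (n+1) → ℝ) → ℝ :=
    (Spx (n+1)).indicator fun x : Fin (n+1) → ℝ => Real.exp (∑ i, a i * x i) with hF
  have hint : Integrable F :=
    (integrable_indicator_iff (measurableSet_Spx _)).2 (integrableOn_Spx a)
  have mp := (volume_preserving_piFinSuccAbove (fun _ : Fin (n+1) => ℝ) 0).symm
  have hint2 : Integrable (F ∘ (MeasurableEquiv.piFinSuccAbove (fun _ : Fin (n+1) => ℝ) 0).symm) :=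
    (mp.integrable_comp_emb (MeasurableEquiv.measurableEmbedding _)).2 hint
  rw [← integral_indicator (measurableSet_Spx _), ← hF, ← mp.integral_comp' F]
  rw [show (volume : Measure (ℝ × (Fin n → ℝ))) = volume.prod volume from rfl] at hint2 ⊢
  rw [MeasureTheory.integral_prod_symm (fun z : ℝ × (Fin n → ℝ) =>
    F ((MeasurableEquiv.piFinSuccAbove (fun _ : Fin (n+1) => ℝ) 0).symm z)) hint2]
  simp only [Function.comp, MeasurableEquiv.piFinSuccAbove_symm_apply, Fin.insertNthEquiv,
    Equiv.coe_fn_mk, Fin.insertNth_zero, cast_eq]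
  rw [← integral_indicator (measurableSet_Spx n)]
  refine integral_congr_ae (Filter.Eventually.of_forall fun y => ?_)
  by_cases hy : y ∈ Spx n
  · rw [Set.indicator_of_mem hy]
    have key : ∀ t : ℝ, F (Fin.cons t y) =
        (Set.Icc 0 (Bnd n y)).indicator
          (fun t => Real.exp (a 0 * t) * Real.exp (∑ i : Fin n, a i.succ * y i)) t := by
      intro t
      by_cases ht : t ∈ Set.Icc 0 (Bnd n y)
      · rw [hF, Set.indicator_of_mem (cons_mem_Spx.2 ⟨hy, ht⟩), Set.indicator_of_mem ht,
          Fin.sum_univ_succ, ← Real.exp_add]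
        simp
      · rw [hF, Set.indicator_of_notMem (fun hmem => ht (cons_mem_Spx.1 hmem).2),
          Set.indicator_of_notMem ht]
    simp_rw [key]
    rw [integral_indicator measurableSet_Icc, integral_mul_const,
      integral_Icc_eq_integral_Ioc, ← intervalIntegral.integral_of_le (Bnd_nonneg hy),
      intervalIntegral.integral_comp_mul_left (fun u => Real.exp u) ha0,
      integral_exp]
    rw [mul_comm]
    simp [smul_eq_mul, div_eq_inv_mul, mul_zero, Real.exp_zero]
  · rw [Set.indicator_of_notMem hy]
    have key : ∀ t : ℝ, F (Fin.cons t y) = 0 := fun t =>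
      Set.indicator_of_notMem (fun hmem => hy (cons_mem_Spx.1 hmem).1) _
    simp [key]

lemma Spx_zero_univ : Spx 0 = Set.univ :=
  Set.eq_univ_of_forall fun _x => ⟨fun i => i.elim0, fun i => i.elim0⟩

lemma integral_Spx_zero (c : ℝ) : (∫ _x in Spx 0, c) = c := by
  rw [Spx_zero_univ, setIntegral_univ, integral_const]
  have : (volume : Measure (Fin 0 → ℝ)) Set.univ = 1 := by
    simp [volume_pi]
  rw [Measure.real, this]
  simp

lemma fubini_step' (n : ℕ) (a : Fin (n+2) → ℝ) (ha0 : a 0 ≠ 0) :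
    (∫ x in Spx (n+2), Real.exp (∑ i, a i * x i)) =
      ((∫ y in Spx (n+1), Real.exp (∑ i : Fin (n+1),
          (Fin.cons (α := fun _ => ℝ) (a 0 + a 1) fun j : Fin n => a j.succ.succ) i * y i)) -
        ∫ y in Spx (n+1), Real.exp (∑ i : Fin (n+1), a i.succ * y i)) / a 0 := by
  rw [fubini_step (n+1) a ha0]
  have hB : ∀ y : Fin (n+1) → ℝ, Bnd (n+1) y = y 0 := fun y => dif_neg (Nat.succ_ne_zero n)
  have key : ∀ y : Fin (n+1) → ℝ,
      Real.exp (∑ i : Fin (n+1), a i.succ * y i) * ((Real.exp (a 0 * Bnd (n+1) y) - 1) / a 0) =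
      (Real.exp (∑ i : Fin (n+1),
          (Fin.cons (α := fun _ => ℝ) (a 0 + a 1) fun j : Fin n => a j.succ.succ) i * y i) -
        Real.exp (∑ i : Fin (n+1), a i.succ * y i)) / a 0 := by
    intro y
    rw [hB]
    have hs : ∑ i : Fin (n+1),
        (Fin.cons (α := fun _ => ℝ) (a 0 + a 1) fun j : Fin n => a j.succ.succ) i * y i
        = a 0 * y 0 + ∑ i : Fin (n+1), a i.succ * y i := by
      rw [Fin.sum_univ_succ, Fin.sum_univ_succ]
      simp only [Fin.cons_zero, Fin.cons_succ, Fin.succ_zero_eq_one]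
      ring
    rw [hs, Real.exp_add]
    ring
  simp_rw [key]
  rw [integral_div, integral_sub (integrableOn_Spx _) (integrableOn_Spx (fun i => a i.succ))]

lemma key_lemma : ∀ (n : ℕ) (a : Fin n → ℝ),
    (∀ i j, i ≤ n → j ≤ n → i ≠ j → pts n a i ≠ pts n a j) →
    (∫ x in Spx n, Real.exp (∑ i, a i * x i)) = divDiff Real.exp n (pts n a) := by
  intro n
  induction n using Nat.strong_induction_on with
  | _ n ih =>
    match n with
    | 0 =>
      intro a _hd
      simp only [Finset.univ_eq_empty, Finset.sum_empty, Real.exp_zero]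
      rw [integral_Spx_zero]
      simp [divDiff, pts_zero]
    | 1 =>
      intro a hd
      have hp1 : pts 1 a 1 = a 0 := by
        rw [pts_top]; simp
      have ha0 : a 0 ≠ 0 := by
        have := hd 1 0 le_rfl (by omega) (by omega)
        rw [pts_zero, hp1] at this
        exact this
      rw [fubini_step 0 a ha0]
      have key : ∀ y : Fin 0 → ℝ, Real.exp (∑ i : Fin 0, a i.succ * y i) *
          ((Real.exp (a 0 * Bnd 0 y) - 1) / a 0) = (Real.exp (a 0) - 1) / a 0 := by
        intro y; simp [Bnd]
      simp_rw [key]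
      rw [integral_Spx_zero]
      rw [divDiff_succ]
      simp [divDiff, pts_zero, hp1]
    | (m+2) =>
      intro a hd
      have hy_top : pts (m+2) a (m+2) = ∑ l, a l := pts_top _ a
      have hy_m1 : pts (m+2) a (m+1) = ∑ l : Fin (m+1), a l.succ := by
        rw [pts_tail (m+1) a (m+1) le_rfl, pts_top]
      have ha0 : a 0 = pts (m+2) a (m+2) - pts (m+2) a (m+1) := by
        rw [hy_top, hy_m1, Fin.sum_univ_succ]; ring
      have ha0' : a 0 ≠ 0 := by
        rw [ha0]
        exact sub_ne_zero.2 (hd (m+2) (m+1) le_rfl (by omega) (by omega))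
      rw [fubini_step' m a ha0']
      have htail : ∀ k, k ≤ m+1 → pts (m+1) (fun i => a i.succ) k = pts (m+2) a k :=
        fun k hk => (pts_tail (m+1) a k hk).symm
      have htl_dist : ∀ i j, i ≤ m+1 → j ≤ m+1 → i ≠ j →
          pts (m+1) (fun i => a i.succ) i ≠ pts (m+1) (fun i => a i.succ) j := by
        intro i j hi hj hij
        rw [htail i hi, htail j hj]
        exact hd i j (by omega) (by omega) hij
      have h2 := ih (m+1) (by omega) (fun i => a i.succ) htl_dist
      set a' : Fin (m+1) → ℝ :=
        Fin.cons (α := fun _ => ℝ) (a 0 + a 1) fun j : Fin m => a j.succ.succ with ha'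
      have ha'_pts : ∀ k, k ≤ m+1 →
          pts (m+1) a' k = if k = m+1 then pts (m+2) a (m+2) else pts (m+2) a k := by
        intro k hk
        by_cases hkm : k = m+1
        · subst hkm
          rw [if_pos rfl, pts_top, hy_top, Fin.sum_univ_succ (f := a'),
            Fin.sum_univ_succ (f := a), Fin.sum_univ_succ (f := fun j : Fin (m+1) => a j.succ)]
          simp only [ha', Fin.cons_zero, Fin.cons_succ, Fin.succ_zero_eq_one]
          ring
        · rw [if_neg hkm]
          have hk' : k ≤ m := by omega
          have t1 : pts (m+1) a' k = pts m (fun i => a' i.succ) k := pts_tail m a' k hk'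
          have t2 : pts (m+1) (fun i : Fin (m+1) => a i.succ) k
              = pts m (fun i : Fin m => a i.succ.succ) k :=
            pts_tail m (fun i => a i.succ) k hk'
          have t3 : (fun i : Fin m => a' i.succ) = fun i : Fin m => a i.succ.succ :=
            funext fun i => by simp [ha']
          rw [t1, t3, ← t2, htail k (by omega)]
      have ha'_dist : ∀ i j, i ≤ m+1 → j ≤ m+1 → i ≠ j →
          pts (m+1) a' i ≠ pts (m+1) a' j := by
        intro i j hi hj hij
        rw [ha'_pts i hi, ha'_pts j hj]
        rcases eq_or_ne i (m+1) with hi' | hi' <;> rcases eq_or_ne j (m+1) with hj' | hj'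
        · omega
        · subst hi'
          rw [if_pos rfl, if_neg hj']
          exact hd (m+2) j (by omega) (by omega) (by omega)
        · subst hj'
          rw [if_neg hi', if_pos rfl]
          exact hd i (m+2) (by omega) (by omega) (by omega)
        · rw [if_neg hi', if_neg hj']
          exact hd i j (by omega) (by omega) hij
      have h1 := ih (m+1) (by omega) a' ha'_dist
      rw [h1, h2]
      have e2 : divDiff Real.exp (m+1) (pts (m+1) (fun i => a i.succ))
          = divDiff Real.exp (m+1) (pts (m+2) a) :=
        divDiff_congr _ _ _ _ htail
      have e1 : divDiff Real.exp (m+1) (pts (m+1) a')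
          = divDiff Real.exp (m+1)
              (fun i => if i = m+1 then pts (m+2) a (m+1+1) else pts (m+2) a i) :=
        divDiff_congr _ _ _ _ ha'_pts
      rw [e1, e2]
      rw [divDiff_sub_last Real.exp (m+1) (pts (m+2) a)
        (fun i j hi hj hij => hd i j (by omega) (by omega) hij)]
      rw [ha0]

end HermiteGenocchiAux

open HermiteGenocchiAux

/-- The iterated integral of `exp(a₁x₁ + ⋯ + aₙxₙ)` over the ordered simplex
`0 ≤ x₁ ≤ ⋯ ≤ xₙ ≤ 1` equals `exp[0, aₙ, aₙ+aₙ₋₁, ..., aₙ+⋯+a₁]`. -/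
theorem iterated_integral_exp_eq_divDiff (n : ℕ) (a : Fin n → ℝ)
    (ha : Function.Injective a)
    (hdist : ∀ i j, i ≤ n → j ≤ n → i ≠ j →
      (∑ l : Fin n, if n - i ≤ (l : ℕ) then a l else 0) ≠
      (∑ l : Fin n, if n - j ≤ (l : ℕ) then a l else 0)) :
    (∫ x in {x : Fin n → ℝ | (∀ i, 0 ≤ x i ∧ x i ≤ 1) ∧ ∀ i j, i ≤ j → x i ≤ x j},
        Real.exp (∑ i, a i * x i)) =
      divDiff Real.exp n (fun k => ∑ j : Fin n, if n - k ≤ (j : ℕ) then a j else 0) := by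
  exact key_lemma n a hdist
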